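/- Given four distinct points a, b, c, d ∈ ℂ with cross ratio [a,b,c,d] = (a-c)(b-d)/((c-b)(d-a)), and w ∈ ℂ with w² = [a,b,c,d], the unique Möbius transformation M sending a ↦ w, b ↦ 1, c ↦ 0 also sends d ↦ 1+w. -/

import Mathlib

/-- If `w² = [a,b,c,d]` and `M` is a Möbius transformation with `M a = w`, `M b = 1`,
`M c = 0`, then `M d = 1 + w`. -/
theorem mobius_sends_fourth_point (a b c d w : ℂ)
    (hab : a ≠ b) (hac : a ≠ c) (had : a ≠ d) (hbc : b ≠ c) (hbd : b ≠ d) (hcd : c ≠ d)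
    (hw : w ^ 2 = (a - c) * (b - d) / ((c - b) * (d - a)))
    (α β γ δ : ℂ) (hdet : α * δ - β * γ ≠ 0)
    (hda : γ * a + δ ≠ 0) (hdb : γ * b + δ ≠ 0) (hdc : γ * c + δ ≠ 0)
    (hMa : (α * a + β) / (γ * a + δ) = w)
    (hMb : (α * b + β) / (γ * b + δ) = 1)
    (hMc : (α * c + β) / (γ * c + δ) = 0) :
    γ * d + δ ≠ 0 ∧ (α * d + β) / (γ * d + δ) = 1 + w := by
  have hab' : a - b ≠ 0 := sub_ne_zero.2 hab
  have hac' : a - c ≠ 0 := sub_ne_zero.2 hac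
  have hbc' : b - c ≠ 0 := sub_ne_zero.2 hbc
  have hbd' : b - d ≠ 0 := sub_ne_zero.2 hbd
  have hcd' : c - d ≠ 0 := sub_ne_zero.2 hcd
  have hcb : c - b ≠ 0 := fun h => hbc' (by linear_combination -h)
  have hda' : d - a ≠ 0 := fun h => sub_ne_zero.2 had (by linear_combination -h)
  have hba : b - a ≠ 0 := fun h => hab' (by linear_combination -h)
  -- polynomial forms of the hypotheses
  have hβ : α * c + β = 0 := (div_eq_zero_iff.1 hMc).resolve_right hdc
  have hB : α * b + β = γ * b + δ := (div_eq_one_iff_eq hdb).1 hMb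
  have hA : α * a + β = w * (γ * a + δ) := (div_eq_iff hda).1 hMa
  -- cleaned cross-ratio hypothesis
  have hw' : w ^ 2 * ((c - b) * (d - a)) = (a - c) * (b - d) := by
    field_simp at hw; linear_combination hw
  have hw0 : w ≠ 0 := by
    intro h
    apply hac'
    have : (a - c) * (b - d) = 0 := by rw [← hw']; rw [h]; ring
    rcases mul_eq_zero.1 this with h1 | h1
    · exact h1
    · exact absurd h1 hbd'
  have hw1 : w ^ 2 ≠ 1 := by
    intro h
    rw [h, one_mul] at hw'
    have : (a - b) * (d - c) = 0 := by linear_combination hw'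
    rcases mul_eq_zero.1 this with h1 | h1
    · exact hab' h1
    · exact sub_ne_zero.2 (Ne.symm hcd) h1
  have hα : α ≠ 0 := by
    intro h
    apply hdet
    have hβ0 : β = 0 := by linear_combination hβ - c * h
    rw [h, hβ0]; ring
  -- key identity for γ * d + δ
  have hkey : (γ * d + δ) * (w * (b - a)) =
      α * (w * (b - c) * (d - a) + (b - d) * (a - c)) := by
    linear_combination (-(b - d)) * hA + (-(w * (d - a))) * hB
      + (w * (d - a) - (d - b)) * hβ
  have hBne : w * (b - c) * (d - a) + (b - d) * (a - c) ≠ 0 := by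
    intro h
    -- then (b-d)(a-c) = -w(b-c)(d-a) and hw' forces w = 1
    apply hw1
    have h2 : w ^ 2 * ((c - b) * (d - a)) = w * ((c - b) * (d - a)) := by
      linear_combination hw' + h
    have h3 : (w ^ 2 - w) * ((c - b) * (d - a)) = 0 := by linear_combination h2
    rcases mul_eq_zero.1 h3 with h4 | h4
    · have hw_eq : w = 1 := by
        have : w * (w - 1) = 0 := by linear_combination h4
        rcases mul_eq_zero.1 this with h5 | h5
        · exact absurd h5 hw0
        · linear_combination h5
      rw [hw_eq]; ring
    · rcases mul_eq_zero.1 h4 with h5 | h5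
      · exact absurd h5 hcb
      · exact absurd h5 hda'
  have hdd : γ * d + δ ≠ 0 := by
    intro h
    apply mul_ne_zero hα hBne
    rw [← hkey, h]; ring
  refine ⟨hdd, ?_⟩
  rw [div_eq_iff hdd]
  -- multiply the target by w * (b - a) ≠ 0 and use hkey and hw'
  have hwba : w * (b - a) ≠ 0 := mul_ne_zero hw0 hba
  have : (α * d + β) * (w * (b - a)) = ((1 + w) * (γ * d + δ)) * (w * (b - a)) := by
    rw [mul_comm ((1 + w) * (γ * d + δ)) (w * (b - a))]
    have expand : (w * (b - a)) * ((1 + w) * (γ * d + δ)) =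
        (1 + w) * ((γ * d + δ) * (w * (b - a))) := by ring
    rw [expand, hkey]
    linear_combination (w * (b - a)) * hβ + α * hw'
  exact mul_right_cancel₀ hwba this
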